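/- If C is a Kolmogorov matrix (not necessarily irreducible), then 0 is an eigenvalue of C admitting a right eigenvector k with all components nonnegative and k ≠ 0. -/

import Mathlib

open Matrix Filter Topology

/-- If `C` is a Kolmogorov matrix (not necessarily irreducible), then `0`
is an eigenvalue of `C` admitting a nonzero nonnegative right eigenvector. -/
theorem kolmogorov_exists_nonneg_null_vector (n : ℕ) (hn : 0 < n)
    (C : Matrix (Fin n) (Fin n) ℝ)
    (hoff : ∀ i j, i ≠ j → 0 ≤ C i j)
    (hcol : ∀ j, ∑ i, C i j = 0) :
    ∃ k : Fin n → ℝ, k ≠ 0 ∧ (∀ i, 0 ≤ k i) ∧ C.mulVec k = 0 := by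
  classical
  set s : ℝ := 1 + ∑ j, |C j j| with hs_def
  have hs1 : (1:ℝ) ≤ s := by
    have : 0 ≤ ∑ j, |C j j| := Finset.sum_nonneg fun j _ => abs_nonneg _
    simp [hs_def]; linarith
  have hs0 : (0:ℝ) < s := lt_of_lt_of_le one_pos hs1
  set M : Matrix (Fin n) (Fin n) ℝ := s⁻¹ • (C + s • (1 : Matrix (Fin n) (Fin n) ℝ)) with hM_def
  -- entries of M are nonnegative
  have hMentry : ∀ i j, 0 ≤ M i j := by
    intro i j
    by_cases h : i = j
    · subst h
      have h1 : |C i i| ≤ ∑ j, |C j j| :=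
        Finset.single_le_sum (f := fun j => |C j j|) (fun j _ => abs_nonneg _) (Finset.mem_univ i)
      have h2 : -C i i ≤ s := by
        have := neg_abs_le (C i i); simp [hs_def]; nlinarith
      have h3 : 0 ≤ C i i + s := by linarith
      have : M i i = s⁻¹ * (C i i + s) := by
        simp [hM_def, Matrix.add_apply, Matrix.smul_apply, Matrix.one_apply]; ring
      rw [this]
      positivity
    · have : M i j = s⁻¹ * C i j := by
        simp [hM_def, Matrix.add_apply, Matrix.smul_apply, Matrix.one_apply, h]
      rw [this]
      have := hoff i j h
      positivity
  -- columns of M sum to 1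
  have hMcol : ∀ j, ∑ i, M i j = 1 := by
    intro j
    have : ∑ i, M i j = s⁻¹ * ((∑ i, C i j) + s * ∑ i, (1 : Matrix (Fin n) (Fin n) ℝ) i j) := by
      simp [hM_def, Matrix.add_apply, Matrix.smul_apply, Finset.mul_sum, Finset.sum_add_distrib,
        mul_add]
    have h1 : ∑ i, (1 : Matrix (Fin n) (Fin n) ℝ) i j = 1 := by
      simp [Matrix.one_apply]
    rw [this, hcol j, h1]
    field_simp
    ring
  -- mulVec by M preserves the simplex
  have hMstep : ∀ x : Fin n → ℝ, (∀ i, 0 ≤ x i) → (∑ i, x i = 1) →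
      (∀ i, 0 ≤ M.mulVec x i) ∧ ∑ i, M.mulVec x i = 1 := by
    intro x hx hxs
    constructor
    · intro i
      simp only [Matrix.mulVec, dotProduct]
      exact Finset.sum_nonneg fun j _ => mul_nonneg (hMentry i j) (hx j)
    · have : ∑ i, M.mulVec x i = ∑ j, (∑ i, M i j) * x j := by
        simp only [Matrix.mulVec, dotProduct]
        rw [Finset.sum_comm]
        simp [Finset.sum_mul]
      rw [this]
      simp only [hMcol, one_mul, hxs]
  -- the iterates
  set x0 : Fin n → ℝ := fun _ => (n : ℝ)⁻¹ with hx0_def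
  have hn0 : (n:ℝ) ≠ 0 := Nat.cast_ne_zero.mpr hn.ne'
  have hx0S : (∀ i, 0 ≤ x0 i) ∧ ∑ i, x0 i = 1 := by
    constructor
    · intro i; simp only [hx0_def]; positivity
    · simp [hx0_def, Finset.sum_const, Finset.card_univ]
      field_simp
  set X : ℕ → Fin n → ℝ := fun k => (M ^ k).mulVec x0 with hX_def
  have hXstep : ∀ k, X (k + 1) = M.mulVec (X k) := by
    intro k
    simp [hX_def, pow_succ', ← Matrix.mulVec_mulVec]
  have hXS : ∀ k, (∀ i, 0 ≤ X k i) ∧ ∑ i, X k i = 1 := by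
    intro k
    induction k with
    | zero => simpa [hX_def] using hx0S
    | succ k ih =>
      rw [hXstep k]
      exact hMstep (X k) ih.1 ih.2
  -- Cesàro averages
  set v : ℕ → Fin n → ℝ :=
    fun N => ((N : ℝ) + 1)⁻¹ • ∑ k ∈ Finset.range (N + 1), X k with hv_def
  have hNpos : ∀ N : ℕ, (0:ℝ) < (N:ℝ) + 1 := fun N => by positivity
  have hvS : ∀ N, (∀ i, 0 ≤ v N i) ∧ ∑ i, v N i = 1 := by
    intro N
    constructor
    · intro i
      simp only [hv_def, Pi.smul_apply, smul_eq_mul, Finset.sum_apply]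
      exact mul_nonneg (by positivity) (Finset.sum_nonneg fun k _ => (hXS k).1 i)
    · simp only [hv_def, Pi.smul_apply, smul_eq_mul, Finset.sum_apply]
      rw [← Finset.mul_sum, Finset.sum_comm]
      have : ∑ k ∈ Finset.range (N + 1), ∑ i, X k i = (N:ℝ) + 1 := by
        simp [(fun k => (hXS k).2)]
      rw [this]
      field_simp
  -- the simplex is compact
  set S : Set (Fin n → ℝ) := {x | (∀ i, 0 ≤ x i) ∧ ∑ i, x i = 1} with hS_def
  have hnormS : ∀ x ∈ S, ‖x‖ ≤ 1 := by
    intro x hx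
    rw [pi_norm_le_iff_of_nonneg zero_le_one]
    intro i
    rw [Real.norm_eq_abs, abs_of_nonneg (hx.1 i)]
    calc x i ≤ ∑ j, x j := Finset.single_le_sum (fun j _ => hx.1 j) (Finset.mem_univ i)
    _ = 1 := hx.2
  have hScompact : IsCompact S := by
    apply Metric.isCompact_of_isClosed_isBounded
    · have h1 : IsClosed {x : Fin n → ℝ | ∀ i, 0 ≤ x i} := by
        have : {x : Fin n → ℝ | ∀ i, 0 ≤ x i} = ⋂ i, {x | 0 ≤ x i} := by
          ext x; simp
        rw [this]
        exact isClosed_iInter fun i => isClosed_le continuous_const (continuous_apply i)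
      have h2 : IsClosed {x : Fin n → ℝ | ∑ i, x i = 1} :=
        isClosed_eq (continuous_finset_sum _ fun i _ => continuous_apply i) continuous_const
      exact (h1.inter h2).mono (by rfl) |>.mono le_rfl
    · apply Bornology.IsBounded.subset (Metric.isBounded_closedBall (x := (0 : Fin n → ℝ)) (r := 1))
      intro x hx
      simp only [Metric.mem_closedBall, dist_zero_right]
      exact hnormS x hx
  obtain ⟨w, hwS, φ, hφ, hconv⟩ := hScompact.tendsto_subseq (fun N => hvS N)
  -- key identity: M v_N - v_N = (N+1)⁻¹ (X (N+1) - X 0)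
  have hkey : ∀ N, M.mulVec (v N) - v N = ((N : ℝ) + 1)⁻¹ • (X (N + 1) - X 0) := by
    intro N
    have h1 : M.mulVec (v N) = ((N : ℝ) + 1)⁻¹ • ∑ k ∈ Finset.range (N + 1), X (k + 1) := by
      rw [hv_def]
      simp only
      rw [Matrix.mulVec_smul]
      congr 1
      rw [← Matrix.mulVecLin_apply, map_sum]
      exact Finset.sum_congr rfl fun k _ => by rw [Matrix.mulVecLin_apply, ← hXstep]
    rw [h1, hv_def]
    simp only
    rw [← smul_sub]
    congr 1
    have h2 : ∑ k ∈ Finset.range (N + 2), X k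
        = ∑ k ∈ Finset.range (N + 1), X (k + 1) + X 0 := Finset.sum_range_succ' X (N + 1)
    have h3 : ∑ k ∈ Finset.range (N + 2), X k
        = ∑ k ∈ Finset.range (N + 1), X k + X (N + 1) := Finset.sum_range_succ X (N + 1)
    have := h2.symm.trans h3
    -- ∑ X (k+1) + X 0 = ∑ X k + X (N+1)
    have : ∑ k ∈ Finset.range (N + 1), X (k + 1) - ∑ k ∈ Finset.range (N + 1), X k
        = X (N + 1) - X 0 := by
      rw [sub_eq_sub_iff_add_eq_add]
      linear_combination this
    exact this
  -- limit argument
  have hdiff_tendsto_zero :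
      Tendsto (fun j => M.mulVec (v (φ j)) - v (φ j)) atTop (𝓝 0) := by
    have hbound : ∀ j : ℕ, ‖M.mulVec (v (φ j)) - v (φ j)‖ ≤ 2 / ((j : ℝ) + 1) := by
      intro j
      rw [hkey]
      rw [norm_smul]
      have hX1 : ‖X (φ j + 1) - X 0‖ ≤ 2 := by
        calc ‖X (φ j + 1) - X 0‖ ≤ ‖X (φ j + 1)‖ + ‖X 0‖ := norm_sub_le _ _
        _ ≤ 1 + 1 := add_le_add (hnormS _ (hXS _)) (hnormS _ (hXS _))
        _ = 2 := by norm_num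
      have hφj : (j : ℝ) + 1 ≤ (φ j : ℝ) + 1 := by
        have hle : j ≤ φ j := hφ.le_apply
        have : (j:ℝ) ≤ (φ j : ℝ) := Nat.cast_le.mpr hle
        linarith
      have h1 : ‖(((φ j : ℝ) + 1)⁻¹ : ℝ)‖ = ((φ j : ℝ) + 1)⁻¹ := by
        rw [Real.norm_eq_abs, abs_of_pos (by positivity)]
      rw [h1]
      calc ((φ j : ℝ) + 1)⁻¹ * ‖X (φ j + 1) - X 0‖
          ≤ ((φ j : ℝ) + 1)⁻¹ * 2 := by
            apply mul_le_mul_of_nonneg_left hX1 (by positivity)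
        _ ≤ ((j : ℝ) + 1)⁻¹ * 2 := by
            apply mul_le_mul_of_nonneg_right _ (by norm_num)
            exact inv_anti₀ (hNpos j) hφj
        _ = 2 / ((j : ℝ) + 1) := by ring
    have hlim : Tendsto (fun j : ℕ => 2 / ((j : ℝ) + 1)) atTop (𝓝 0) := by
      have h := Filter.Tendsto.div_atTop (f := fun _ : ℕ => (2:ℝ))
        (tendsto_const_nhds) (tendsto_atTop_add_const_right atTop 1 tendsto_natCast_atTop_atTop)
      exact h
    exact squeeze_zero_norm hbound hlim
  have hcont : Continuous fun x : Fin n → ℝ => M.mulVec x - x := by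
    have : Continuous fun x : Fin n → ℝ => M.mulVec x := by
      have := (Matrix.mulVecLin M).continuous_of_finiteDimensional
      exact this
    exact this.sub continuous_id
  have hdiff_tendsto : Tendsto (fun j => M.mulVec (v (φ j)) - v (φ j)) atTop
      (𝓝 (M.mulVec w - w)) := by
    have := (hcont.tendsto w).comp hconv
    exact this
  have hfix : M.mulVec w - w = 0 := tendsto_nhds_unique hdiff_tendsto hdiff_tendsto_zero
  have hMw : M.mulVec w = w := by
    have := hfix; rwa [sub_eq_zero] at this
  -- conclude
  refine ⟨w, ?_, hwS.1, ?_⟩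
  · intro h
    rw [h] at hwS
    have := hwS.2
    simp at this
  · have h := hMw
    rw [hM_def, Matrix.smul_mulVec, Matrix.add_mulVec, Matrix.smul_mulVec,
      Matrix.one_mulVec] at h
    have h2 : C.mulVec w + s • w = s • w := by
      have h3 := congrArg (fun y => s • y) h
      simp only [smul_smul] at h3
      rw [mul_inv_cancel₀ hs0.ne', one_smul] at h3
      exact h3
    rwa [add_eq_right] at h2
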